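/- Let α, β ∈ ℂ with |α| = |β| = 1 and αβ = 1, set λ(p^ν) = ∑_{j=0}^ν α^{ν−j}β^j and σ(p^n) = ∑_{m=0}^n λ(p^m). Then for complex s with Re(s) > 0, ∑_{h=0}^∞ σ(p^{2h}) p^{−sh} = (1 − p^{−s})^{−1} (1 − α² p^{−s})^{−1} (1 − β² p^{−s})^{−1} (1 + (1 + λ(p)) p^{−s}). -/

import Mathlib

open Finset

private lemma inner_sum_eq (α β : ℂ) (m : ℕ) :
    ∑ j ∈ Finset.range (m + 1), α ^ (m - j) * β ^ j
      = ∑ ij ∈ Finset.HasAntidiagonal.antidiagonal m, α ^ ij.1 * β ^ ij.2 := by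
  rw [Finset.Nat.sum_antidiagonal_eq_sum_range_succ_mk,
    ← Finset.sum_range_reflect (fun k => α ^ k * β ^ (m - k)) (m + 1)]
  refine Finset.sum_congr rfl fun j hj => ?_
  simp only [Finset.mem_range] at hj
  have h1 : m + 1 - 1 - j = m - j := by omega
  have h2 : m - (m - j) = j := by omega
  rw [h1, h2]

private def S2 (n : ℕ) : Finset (ℕ × ℕ) := (Finset.range (n + 1)).biUnion Finset.HasAntidiagonal.antidiagonal

private lemma mem_S2 {n : ℕ} {q : ℕ × ℕ} : q ∈ S2 n ↔ q.1 + q.2 ≤ n := by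
  simp only [S2, Finset.mem_biUnion, Finset.mem_range, Finset.HasAntidiagonal.mem_antidiagonal]
  constructor
  · rintro ⟨m, hm, rfl⟩; omega
  · intro h; exact ⟨q.1 + q.2, by omega, rfl⟩

private lemma card_S2 (n : ℕ) : (S2 n).card ≤ (n + 1) ^ 2 := by
  refine le_trans Finset.card_biUnion_le ?_
  calc ∑ m ∈ Finset.range (n + 1), (Finset.HasAntidiagonal.antidiagonal m).card
      = ∑ m ∈ Finset.range (n + 1), (m + 1) :=
        Finset.sum_congr rfl fun m _ => Finset.Nat.card_antidiagonal m
    _ ≤ ∑ _m ∈ Finset.range (n + 1), (n + 1) := by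
        refine Finset.sum_le_sum fun m hm => ?_
        simp only [Finset.mem_range] at hm; omega
    _ = (n + 1) * (n + 1) := by rw [Finset.sum_const, Finset.card_range, smul_eq_mul]
    _ = (n + 1) ^ 2 := (sq _).symm

private lemma sum_S2 (α β x : ℂ) (h : ℕ) :
    ∑ q ∈ S2 (2 * h), α ^ q.1 * β ^ q.2 * x ^ h
      = (∑ m ∈ Finset.range (2 * h + 1), ∑ j ∈ Finset.range (m + 1), α ^ (m - j) * β ^ j)
          * x ^ h := by
  rw [Finset.sum_mul, S2, Finset.sum_biUnion ?hd]
  · exact Finset.sum_congr rfl fun m _ => by rw [inner_sum_eq, Finset.sum_mul]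
  case hd =>
    intro a _ b _ hab
    refine Finset.disjoint_left.mpr fun q hqa hqb => hab ?_
    rw [Finset.HasAntidiagonal.mem_antidiagonal] at hqa hqb
    omega

private lemma key (α β x : ℂ) (hα : ‖α‖ = 1) (hβ : ‖β‖ = 1) (hαβ : α * β = 1)
    (hx : ‖x‖ < 1) :
    (∑' h : ℕ,
        (∑ m ∈ Finset.range (2 * h + 1), ∑ j ∈ Finset.range (m + 1), α ^ (m - j) * β ^ j) *
          x ^ h) =
      (1 - x)⁻¹ * (1 - α ^ 2 * x)⁻¹ * (1 - β ^ 2 * x)⁻¹ * (1 + (1 + (α + β)) * x) := by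
  have hA : ‖α ^ 2 * x‖ < 1 := by rw [norm_mul, norm_pow, hα]; simpa
  have hB : ‖β ^ 2 * x‖ < 1 := by rw [norm_mul, norm_pow, hβ]; simpa
  set f : ℕ × (ℕ × ℕ) → ℂ :=
    fun p => if p.2.1 + p.2.2 ≤ 2 * p.1 then α ^ p.2.1 * β ^ p.2.2 * x ^ p.1 else 0 with hf_def
  have hvanish : ∀ h : ℕ, ∀ q : ℕ × ℕ, q ∉ S2 (2 * h) → f (h, q) = 0 := by
    intro h q hq
    rw [mem_S2] at hq
    simp only [hf_def]
    rw [if_neg hq]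
  -- summability of norms
  have hsum_norm : Summable fun p => ‖f p‖ := by
    refine (summable_prod_of_nonneg fun p => norm_nonneg _).mpr ⟨fun h => ?_, ?_⟩
    · exact summable_of_ne_finset_zero (s := S2 (2 * h)) fun q hq => by
        rw [hvanish h q hq, norm_zero]
    · have hle : ∀ h : ℕ, (∑' q : ℕ × ℕ, ‖f (h, q)‖) ≤ ((2 * h + 1 : ℕ) : ℝ) ^ 2 * ‖x‖ ^ h := by
        intro h
        rw [tsum_eq_sum (s := S2 (2 * h)) fun q hq => by rw [hvanish h q hq, norm_zero]]
        calc ∑ q ∈ S2 (2 * h), ‖f (h, q)‖ ≤ (S2 (2 * h)).card • (‖x‖ ^ h) := by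
              refine Finset.sum_le_card_nsmul _ _ _ fun q hq => ?_
              simp only [hf_def]
              split
              · rw [norm_mul, norm_mul, norm_pow, norm_pow, norm_pow, hα, hβ]
                simp
              · rw [norm_zero]; positivity
          _ ≤ ((2 * h + 1 : ℕ) : ℝ) ^ 2 * ‖x‖ ^ h := by
              rw [nsmul_eq_mul]
              refine mul_le_mul_of_nonneg_right ?_ (by positivity)
              have hc := card_S2 (2 * h)
              calc ((S2 (2 * h)).card : ℝ) ≤ (((2 * h + 1) ^ 2 : ℕ) : ℝ) := by exact_mod_cast hc
                _ = ((2 * h + 1 : ℕ) : ℝ) ^ 2 := by push_cast; ring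
      have hr : ‖‖x‖‖ < 1 := by rwa [Real.norm_eq_abs, abs_of_nonneg (norm_nonneg x)]
      have s2 := summable_pow_mul_geometric_of_norm_lt_one (R := ℝ) 2 hr
      have s1 := summable_pow_mul_geometric_of_norm_lt_one (R := ℝ) 1 hr
      have s0 := summable_geometric_of_norm_lt_one hr
      have hbig : Summable fun h : ℕ => ((2 * h + 1 : ℕ) : ℝ) ^ 2 * ‖x‖ ^ h := by
        refine (((s2.mul_left 4).add (s1.mul_left 4)).add s0).congr fun h => ?_
        push_cast
        ring
      refine Summable.of_nonneg_of_le (fun h => tsum_nonneg fun q => norm_nonneg _)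
        (fun h => hle h) hbig
  have hf_sum : Summable f := hsum_norm.of_norm
  -- rows
  have hBrow : ∀ h : ℕ,
      (∑' q : ℕ × ℕ, f (h, q)) =
        (∑ m ∈ Finset.range (2 * h + 1), ∑ j ∈ Finset.range (m + 1), α ^ (m - j) * β ^ j)
          * x ^ h := by
    intro h
    rw [tsum_eq_sum (s := S2 (2 * h)) (hvanish h), ← sum_S2 α β x h]
    refine Finset.sum_congr rfl fun q hq => ?_
    rw [mem_S2] at hq
    simp only [hf_def]
    rw [if_pos hq]
  -- columns
  have hCcol : ∀ q : ℕ × ℕ,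
      (∑' h : ℕ, f (h, q)) = (1 - x)⁻¹ * (α ^ q.1 * β ^ q.2 * x ^ ((q.1 + q.2 + 1) / 2)) := by
    rintro ⟨i, j⟩
    have hsumq : Summable fun h => f (h, (i, j)) := hf_sum.prod_symm.prod_factor (i, j)
    set c := (i + j + 1) / 2 with hc
    rw [← Summable.sum_add_tsum_nat_add c hsumq]
    have h0 : (∑ k ∈ Finset.range c, f (k, (i, j))) = 0 := by
      refine Finset.sum_eq_zero fun k hk => ?_
      simp only [Finset.mem_range] at hk
      simp only [hf_def]
      rw [if_neg (by omega)]
    rw [h0, zero_add]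
    have hterm : ∀ k : ℕ, f (k + c, (i, j)) = x ^ k * (α ^ i * β ^ j * x ^ c) := by
      intro k
      simp only [hf_def]
      rw [if_pos (by omega), pow_add]
      ring
    rw [tsum_congr hterm, tsum_mul_right, tsum_geometric_of_norm_lt_one hx]
  -- the column-sum function
  set g : ℕ × ℕ → ℂ :=
    fun q => (1 - x)⁻¹ * (α ^ q.1 * β ^ q.2 * x ^ ((q.1 + q.2 + 1) / 2)) with hg_def
  have hg_sum : Summable g := by
    refine (hf_sum.prod_symm.prod).congr fun q => ?_
    exact hCcol q
  -- LHS as double sum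
  have step1 : (∑' h : ℕ,
      (∑ m ∈ Finset.range (2 * h + 1), ∑ j ∈ Finset.range (m + 1), α ^ (m - j) * β ^ j) *
        x ^ h) = ∑' q : ℕ × ℕ, g q := by
    calc (∑' h : ℕ,
        (∑ m ∈ Finset.range (2 * h + 1), ∑ j ∈ Finset.range (m + 1), α ^ (m - j) * β ^ j) *
          x ^ h)
        = ∑' h : ℕ, ∑' q : ℕ × ℕ, f (h, q) := by
          refine tsum_congr fun h => (hBrow h).symm
      _ = ∑' p : ℕ × (ℕ × ℕ), f p := (Summable.tsum_prod hf_sum).symm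
      _ = ∑' p : (ℕ × ℕ) × ℕ, f p.swap :=
          ((Equiv.prodComm (ℕ × ℕ) ℕ).tsum_eq f).symm
      _ = ∑' q : ℕ × ℕ, ∑' h : ℕ, f (h, q) := Summable.tsum_prod hf_sum.prod_symm
      _ = ∑' q : ℕ × ℕ, g q := tsum_congr fun q => hCcol q
  rw [step1]
  -- now evaluate the double sum over q by parity splitting
  have hgeomB : Summable fun b : ℕ => (β ^ 2 * x) ^ b := summable_geometric_of_norm_lt_one hB
  have hgeomA : Summable fun a : ℕ => (α ^ 2 * x) ^ a := summable_geometric_of_norm_lt_one hA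
  have heven : ∀ i b : ℕ,
      g (i, 2 * b) = (β ^ 2 * x) ^ b * ((1 - x)⁻¹ * (α ^ i * x ^ ((i + 1) / 2))) := by
    intro i b
    simp only [hg_def]
    have h1 : (i + 2 * b + 1) / 2 = (i + 1) / 2 + b := by omega
    rw [h1, pow_add, pow_mul, mul_pow]
    ring
  have hodd : ∀ i b : ℕ,
      g (i, 2 * b + 1) = (β ^ 2 * x) ^ b * ((1 - x)⁻¹ * (α ^ i * β * x ^ ((i + 2) / 2))) := by
    intro i b
    simp only [hg_def]
    have h1 : (i + (2 * b + 1) + 1) / 2 = (i + 2) / 2 + b := by omega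
    rw [h1, pow_add, pow_succ, pow_mul, mul_pow]
    ring
  have inner_eq : ∀ i : ℕ,
      (∑' j : ℕ, g (i, j)) =
        (1 - β ^ 2 * x)⁻¹ * ((1 - x)⁻¹ * (α ^ i * x ^ ((i + 1) / 2))) +
          (1 - β ^ 2 * x)⁻¹ * ((1 - x)⁻¹ * (α ^ i * β * x ^ ((i + 2) / 2))) := by
    intro i
    rw [← tsum_even_add_odd
      ((hgeomB.mul_right _).congr fun b => (heven i b).symm)
      ((hgeomB.mul_right _).congr fun b => (hodd i b).symm),
      tsum_congr (heven i), tsum_congr (hodd i), tsum_mul_right, tsum_mul_right,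
      tsum_geometric_of_norm_lt_one hB]
  set G : ℕ → ℂ := fun i =>
    (1 - β ^ 2 * x)⁻¹ * ((1 - x)⁻¹ * (α ^ i * x ^ ((i + 1) / 2))) +
      (1 - β ^ 2 * x)⁻¹ * ((1 - x)⁻¹ * (α ^ i * β * x ^ ((i + 2) / 2))) with hG_def
  have hGeven : ∀ a : ℕ,
      G (2 * a) = (α ^ 2 * x) ^ a *
        ((1 - β ^ 2 * x)⁻¹ * ((1 - x)⁻¹ * (1 + β * x))) := by
    intro a
    simp only [hG_def]
    have h1 : (2 * a + 1) / 2 = a := by omega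
    have h2 : (2 * a + 2) / 2 = a + 1 := by omega
    rw [h1, h2, pow_succ, pow_mul, mul_pow]
    ring
  have hGodd : ∀ a : ℕ,
      G (2 * a + 1) = (α ^ 2 * x) ^ a *
        ((1 - β ^ 2 * x)⁻¹ * ((1 - x)⁻¹ * (α * x + α * β * x))) := by
    intro a
    simp only [hG_def]
    have h1 : (2 * a + 1 + 1) / 2 = a + 1 := by omega
    have h2 : (2 * a + 1 + 2) / 2 = a + 1 := by omega
    rw [h1, h2]
    have h3 : α ^ (2 * a + 1) = (α ^ 2) ^ a * α := by rw [pow_succ, pow_mul]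
    rw [h3, pow_succ, mul_pow]
    ring
  calc (∑' q : ℕ × ℕ, g q)
      = ∑' i : ℕ, ∑' j : ℕ, g (i, j) := Summable.tsum_prod hg_sum
    _ = ∑' i : ℕ, G i := tsum_congr fun i => inner_eq i
    _ = (∑' a : ℕ, G (2 * a)) + ∑' a : ℕ, G (2 * a + 1) := by
        rw [tsum_even_add_odd
          ((hgeomA.mul_right _).congr fun a => (hGeven a).symm)
          ((hgeomA.mul_right _).congr fun a => (hGodd a).symm)]
    _ = (1 - α ^ 2 * x)⁻¹ * ((1 - β ^ 2 * x)⁻¹ * ((1 - x)⁻¹ * (1 + β * x))) +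
          (1 - α ^ 2 * x)⁻¹ * ((1 - β ^ 2 * x)⁻¹ * ((1 - x)⁻¹ * (α * x + α * β * x))) := by
        rw [tsum_congr hGeven, tsum_congr hGodd, tsum_mul_right, tsum_mul_right,
          tsum_geometric_of_norm_lt_one hA]
    _ = (1 - x)⁻¹ * (1 - α ^ 2 * x)⁻¹ * (1 - β ^ 2 * x)⁻¹ * (1 + (1 + (α + β)) * x) := by
        linear_combination ((1 - x)⁻¹ * (1 - α ^ 2 * x)⁻¹ * (1 - β ^ 2 * x)⁻¹ * x) * hαβ

/-- Local generating-series identity for `∑_h σ(p^{2h}) p^{-sh}`, where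
`λ(p^ν) = ∑_{j≤ν} α^{ν-j}β^j` and `σ(p^n) = ∑_{m≤n} λ(p^m)`. -/
theorem local_series_even (α β : ℂ) (hα : ‖α‖ = 1) (hβ : ‖β‖ = 1)
    (hαβ : α * β = 1) (p : ℕ) (hp : p.Prime) (s : ℂ) (hs : 0 < s.re) :
    (∑' h : ℕ,
        (∑ m ∈ Finset.range (2 * h + 1), ∑ j ∈ Finset.range (m + 1), α ^ (m - j) * β ^ j) *
          ((p : ℂ) ^ (-s)) ^ h) =
      (1 - (p : ℂ) ^ (-s))⁻¹ * (1 - α ^ 2 * (p : ℂ) ^ (-s))⁻¹ *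
        (1 - β ^ 2 * (p : ℂ) ^ (-s))⁻¹ * (1 + (1 + (α + β)) * (p : ℂ) ^ (-s)) := by
  have hp1 : (1 : ℝ) < (p : ℝ) := by exact_mod_cast hp.one_lt
  have hx : ‖(p : ℂ) ^ (-s)‖ < 1 := by
    have hcast : ((p : ℝ) : ℂ) = (p : ℂ) := by push_cast; ring
    rw [← hcast, Complex.norm_cpow_eq_rpow_re_of_pos (by linarith)]
    have : (-s).re < 0 := by simpa using neg_neg_iff_pos.mpr hs
    exact Real.rpow_lt_one_of_one_lt_of_neg hp1 this
  exact key α β ((p : ℂ) ^ (-s)) hα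
    hβ hαβ hx
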